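/- Let Λ̃ be a geodesic lamination on H² (a closed set of pairwise non-crossing geodesics, viewed as pairs of distinct boundary points) which is the lift of a minimal lamination on a surface that is not a single closed geodesic. Then for every point a ∈ ∂H² and every positively oriented triple (a,c,d), the set of leaves of Λ̃ of the form (a, x) with x ∈ ]c,d[ contains at most two elements. -/

import Mathlib

open Set

instance : Fact ((0:ℝ) < 1) := ⟨one_pos⟩

/-- The circle `∂H² = S¹`, as `ℝ/ℤ`. -/
abbrev Circ := AddCircle (1 : ℝ)

/-- The open arc `]a,b[` on a circularly ordered set. -/
def oarc {S : Type*} [CircularOrder S] (a b : S) : Set S := {x | sbtw a x b}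

/-- Two geodesics, given as ordered pairs of endpoints, cross. -/
def CrossesP {S : Type*} [CircularOrder S] (p q : S × S) : Prop :=
  Xor' (q.1 ∈ oarc p.1 p.2) (q.2 ∈ oarc p.1 p.2)

noncomputable def iota (x : Circ) : ℝ := (AddCircle.equivIco 1 0 x : ℝ)

lemma iota_mem (x : Circ) : iota x ∈ Ico (0:ℝ) 1 := by
  have h := (AddCircle.equivIco 1 0 x).2
  simpa [iota] using h

lemma coe_iota (x : Circ) : ((iota x : ℝ) : Circ) = x :=
  (AddCircle.equivIco 1 0).symm_apply_apply x

lemma iota_coe {t : ℝ} (ht : t ∈ Ico (0:ℝ) 1) : iota ((t : ℝ) : Circ) = t := by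
  have : (AddCircle.equivIco 1 0) ((t:ℝ) : Circ) = ⟨toIcoMod one_pos 0 t, toIcoMod_mem_Ico one_pos 0 t⟩ :=
    QuotientAddGroup.equivIcoMod_coe one_pos 0 t
  have h2 : toIcoMod one_pos 0 t = t := (toIcoMod_eq_self one_pos).2 (by rwa [zero_add])
  simp [iota, this, h2]

lemma iota_eq_zero {x : Circ} (h : iota x = 0) : x = 0 := by
  have := coe_iota x
  rw [h] at this
  simpa using this.symm

/-- The master characterization of `sbtw` on the circle. -/
lemma sbtw_shift {A s t : ℝ} (hs : s ∈ Ico (0:ℝ) 1) (ht : t ∈ Ico (0:ℝ) 1) :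
    sbtw ((A:ℝ) : Circ) (((A + s : ℝ)) : Circ) (((A + t : ℝ)) : Circ) ↔ 0 < s ∧ s < t := by
  rw [sbtw_iff_not_btw]
  have hbtw : btw (((A + t : ℝ)) : Circ) (((A + s : ℝ)) : Circ) ((A:ℝ) : Circ)
      ↔ btw ((A:ℝ) : Circ) (((A + t : ℝ)) : Circ) (((A + s : ℝ)) : Circ) := by
    constructor
    · intro h; exact h.cyclic_left.cyclic_left
    · intro h; exact h.cyclic_left
  rw [hbtw, QuotientAddGroup.btw_coe_iff]
  have hIco : toIcoMod one_pos A (A + t) = A + t :=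
    (toIcoMod_eq_self one_pos).2 ⟨by linarith [ht.1], by linarith [ht.2]⟩
  rw [hIco]
  rcases eq_or_lt_of_le hs.1 with h0 | h0
  · -- s = 0
    have : toIocMod one_pos A (A + s) = A + 1 := by
      rw [← h0, add_zero, toIocMod_apply_left]
    rw [this]
    constructor
    · intro h; exfalso; exact h (by linarith [ht.2])
    · rintro ⟨h1, _⟩; exact absurd h0 (by linarith)
  · -- 0 < s
    have : toIocMod one_pos A (A + s) = A + s :=
      (toIocMod_eq_self one_pos).2 ⟨by linarith, by linarith [hs.2]⟩
    rw [this]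
    constructor
    · intro h
      exact ⟨h0, by by_contra hc; exact h (by linarith)⟩
    · rintro ⟨_, h2⟩ hle
      linarith

/-- `sbtw` with a common base point, in `iota` coordinates. -/
lemma sbtw_iff_iota (a u v : Circ) :
    sbtw a u v ↔ 0 < iota (u - a) ∧ iota (u - a) < iota (v - a) := by
  obtain ⟨A, rfl⟩ : ∃ A : ℝ, ((A:ℝ) : Circ) = a := ⟨iota a, coe_iota a⟩
  have hu : (((A + iota (u - ((A:ℝ):Circ)) : ℝ)) : Circ) = u := by
    rw [AddCircle.coe_add, coe_iota]
    abel
  have hv : (((A + iota (v - ((A:ℝ):Circ)) : ℝ)) : Circ) = v := by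
    rw [AddCircle.coe_add, coe_iota]
    abel
  conv_lhs => rw [← hu, ← hv]
  exact sbtw_shift (iota_mem _) (iota_mem _)

theorem at_most_two_leaves_from_a_point
    (Λ : Set (Circ × Circ)) (hclosed : IsClosed Λ)
    (hdisj : ∀ p ∈ Λ, ∀ q ∈ Λ, ¬ CrossesP p q)
    (happrox : ∀ p ∈ Λ, ∀ U : Set (Circ × Circ), IsOpen U → p ∈ U →
      ∃ q ∈ Λ ∩ U, q.1 ≠ p.1 ∧ q.2 ≠ p.2)
    (a c d : Circ) (hacd : sbtw a c d) :
    ∀ c₁ ∈ oarc c d, ∀ c₂ ∈ oarc c d, ∀ c₃ ∈ oarc c d,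
      (a, c₁) ∈ Λ → (a, c₂) ∈ Λ → (a, c₃) ∈ Λ →
      c₁ = c₂ ∨ c₁ = c₃ ∨ c₂ = c₃ := by
  intro c₁ h1 c₂ h2 c₃ h3 hL1 hL2 hL3
  by_contra hcon
  push_neg at hcon
  obtain ⟨h12, h13, h23⟩ := hcon
  -- each cᵢ ≠ a
  have hne : ∀ x ∈ oarc c d, x ≠ a := by
    intro x hx hxa
    subst hxa
    have h1 : sbtw c x d := hx
    exact (sbtw_asymm (sbtw_cyclic_left h1)) (sbtw_cyclic_left hacd)
  -- key lemma
  have key : ∀ x y z : Circ, (a, x) ∈ Λ → (a, y) ∈ Λ → (a, z) ∈ Λ →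
      0 < iota (x - a) → iota (x - a) < iota (y - a) → iota (y - a) < iota (z - a) → False := by
    intro x y z hLx hLy hLz hx0 hxy hyz
    set fx := iota (x - a) with hfx
    set fy := iota (y - a) with hfy
    set fz := iota (z - a) with hfz
    have hfz1 : fz < 1 := (iota_mem _).2
    have hfx0 : (0:ℝ) ≤ fx := (iota_mem _).1
    -- two open sets on the circle
    set S1 : Set Circ := (fun w : Circ => w - a) ⁻¹' ((fun t : ℝ => ((t:ℝ) : Circ)) '' Ioo (fz - 1) fx) with hS1
    set S2 : Set Circ := (fun w : Circ => w - a) ⁻¹' ((fun t : ℝ => ((t:ℝ) : Circ)) '' Ioo fx fz) with hS2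
    have hcont : Continuous (fun w : Circ => w - a) := continuous_id.sub continuous_const
    have hopenmap : IsOpenMap (fun t : ℝ => ((t:ℝ) : Circ)) := QuotientAddGroup.isOpenMap_coe
    have hS1open : IsOpen S1 := (hopenmap _ isOpen_Ioo).preimage hcont
    have hS2open : IsOpen S2 := (hopenmap _ isOpen_Ioo).preimage hcont
    -- membership characterizations
    have memS2 : ∀ w : Circ, w ∈ S2 ↔ fx < iota (w - a) ∧ iota (w - a) < fz := by
      intro w
      simp only [hS2, Set.mem_preimage, Set.mem_image]
      constructor
      · rintro ⟨t, ht, hte⟩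
        have ht' : t ∈ Ico (0:ℝ) 1 := ⟨by linarith [ht.1], by linarith [ht.2]⟩
        rw [← hte, iota_coe ht']
        exact ht
      · rintro ⟨hl, hr⟩
        exact ⟨iota (w - a), ⟨by linarith, hr⟩, coe_iota _⟩
    have memS1 : ∀ w : Circ, w ∈ S1 ↔ iota (w - a) < fx ∨ fz < iota (w - a) := by
      intro w
      simp only [hS1, Set.mem_preimage, Set.mem_image]
      constructor
      · rintro ⟨t, ht, hte⟩
        rcases le_or_gt 0 t with h0 | h0
        · left
          have ht' : t ∈ Ico (0:ℝ) 1 := ⟨h0, by linarith [ht.2, (iota_mem (x - a)).2]⟩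
          rw [← hte, iota_coe ht']
          exact ht.2
        · right
          have hte2 : ((t + 1 : ℝ) : Circ) = w - a := by
            rw [AddCircle.coe_add_period]; exact hte
          have ht' : t + 1 ∈ Ico (0:ℝ) 1 := ⟨by linarith [ht.1, (iota_mem (z - a)).1], by linarith⟩
          rw [← hte2, iota_coe ht']
          linarith [ht.1]
      · rintro (hl | hr)
        · exact ⟨iota (w - a), ⟨by linarith [(iota_mem (w - a)).1], hl⟩, coe_iota _⟩
        · refine ⟨iota (w - a) - 1, ⟨by linarith, by linarith [hx0, (iota_mem (w - a)).2]⟩, ?_⟩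
          calc ((iota (w - a) - 1 : ℝ) : Circ)
              = ((iota (w - a) - 1 + 1 : ℝ) : Circ) := (AddCircle.coe_add_period (1:ℝ) (iota (w - a) - 1)).symm
            _ = ((iota (w - a) : ℝ) : Circ) := by norm_num
            _ = w - a := coe_iota _
    -- (a, y) ∈ S1 ×ˢ S2
    have iota0' : iota (a - a) = 0 := by
      rw [sub_self, show (0 : Circ) = ((0:ℝ) : Circ) by norm_num]
      exact iota_coe ⟨le_refl 0, one_pos⟩
    have hmem : (a, y) ∈ S1 ×ˢ S2 := by
      rw [Set.mem_prod]
      exact ⟨(memS1 a).2 (Or.inl (by rw [iota0']; exact hx0)), (memS2 y).2 ⟨hxy, hyz⟩⟩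
    obtain ⟨⟨b, e⟩, ⟨hbeΛ, hbeU⟩, hbne, hene⟩ :=
      happrox (a, y) hLy (S1 ×ˢ S2) (hS1open.prod hS2open) hmem
    replace hbne : b ≠ a := hbne
    replace hene : e ≠ y := hene
    have hbS1 := (memS1 b).1 hbeU.1
    have heS2 := (memS2 e).1 hbeU.2
    have hb0 : 0 < iota (b - a) := by
      rcases lt_or_eq_of_le (iota_mem (b - a)).1 with h | h
      · exact h
      · exfalso
        apply hbne
        have := iota_eq_zero h.symm
        have hba : b - a = 0 := this
        have := sub_eq_zero.mp hba
        exact this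
    rcases hbS1 with hbl | hbr
    · -- b strictly between a and x : (b,e) crosses (a,x)
      apply hdisj (a, x) hLx (b, e) hbeΛ
      unfold CrossesP oarc
      simp only [Set.mem_setOf_eq]
      left
      constructor
      · rw [sbtw_iff_iota]; exact ⟨hb0, hbl⟩
      · rw [sbtw_iff_iota]
        rintro ⟨-, h⟩
        linarith [heS2.1]
    · -- b beyond z : (b,e) crosses (a,z)
      apply hdisj (a, z) hLz (b, e) hbeΛ
      unfold CrossesP oarc
      simp only [Set.mem_setOf_eq]
      right
      constructor
      · rw [sbtw_iff_iota]
        exact ⟨by linarith, heS2.2⟩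
      · rw [sbtw_iff_iota]
        rintro ⟨-, h⟩
        linarith
  -- now order the three points
  have hpos : ∀ x ∈ oarc c d, 0 < iota (x - a) := by
    intro x hx
    rcases lt_or_eq_of_le (iota_mem (x - a)).1 with h | h
    · exact h
    · exfalso
      exact hne x hx (sub_eq_zero.mp (iota_eq_zero h.symm))
  have hinj : ∀ x y : Circ, iota (x - a) = iota (y - a) → x = y := by
    intro x y h
    have h1 := coe_iota (x - a)
    rw [h, coe_iota] at h1
    have := sub_left_injective h1
    exact this.symm
  have p1 := hpos c₁ h1
  have p2 := hpos c₂ h2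
  have p3 := hpos c₃ h3
  rcases lt_trichotomy (iota (c₁ - a)) (iota (c₂ - a)) with o12 | o12 | o12
  · rcases lt_trichotomy (iota (c₂ - a)) (iota (c₃ - a)) with o23 | o23 | o23
    · exact key c₁ c₂ c₃ hL1 hL2 hL3 p1 o12 o23
    · exact h23 (hinj c₂ c₃ o23)
    · rcases lt_trichotomy (iota (c₁ - a)) (iota (c₃ - a)) with o13 | o13 | o13
      · exact key c₁ c₃ c₂ hL1 hL3 hL2 p1 o13 o23
      · exact h13 (hinj c₁ c₃ o13)
      · exact key c₃ c₁ c₂ hL3 hL1 hL2 p3 o13 o12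
  · exact h12 (hinj c₁ c₂ o12)
  · rcases lt_trichotomy (iota (c₁ - a)) (iota (c₃ - a)) with o13 | o13 | o13
    · exact key c₂ c₁ c₃ hL2 hL1 hL3 p2 o12 o13
    · exact h13 (hinj c₁ c₃ o13)
    · rcases lt_trichotomy (iota (c₂ - a)) (iota (c₃ - a)) with o23 | o23 | o23
      · exact key c₂ c₃ c₁ hL2 hL3 hL1 p2 o23 o13
      · exact h23 (hinj c₂ c₃ o23)
      · exact key c₃ c₂ c₁ hL3 hL2 hL1 p3 o23 o12
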